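/- With G and G_NC as in the standard construction (vertex-splitting of a directed graph G with feedback vertex set V_τ), for every v ∈ V_τ, directed paths in G_NC from v to D_{v'} correspond bijectively to directed cycles in G passing through v and through no other vertex of V_τ. -/

import Mathlib

def IsDiCycle {V : Type*} (A : V → V → Prop) (c : List V) : Prop :=
  c ≠ [] ∧ c.Nodup ∧ c.Chain' A ∧ ∀ x ∈ c.getLast?, ∀ y ∈ c.head?, A x y

/-- A directed path from `s` to `t`: a nonempty list of distinct vertices starting at
`s`, ending at `t`, with consecutive vertices adjacent. -/
def IsDiPathFromTo {V : Type*} (A : V → V → Prop) (l : List V) (s t : V) : Prop :=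
  l ≠ [] ∧ l.Nodup ∧ l.Chain' A ∧ l.head? = some s ∧ l.getLast? = some t

inductive NCVert (V : Type*) where
  | orig : V → NCVert V
  | dash : V → NCVert V
  | D : V → NCVert V
  | D' : V → NCVert V

def NCAdj {V : Type*} (A : V → V → Prop) (Vτ : Set V) : NCVert V → NCVert V → Prop
  | .orig u, .dash v => u = v
  | .dash u, .orig w => A u w ∧ w ∉ Vτ
  | .dash u, .D w => A u w ∧ w ∈ Vτ
  | .D u, .D' w => u = w ∧ w ∈ Vτ
  | _, _ => False

/-- Extract the original (undashed) vertices visited by a trail of `G_NC`. -/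
def origVerts {V : Type*} (l : List (NCVert V)) : List V :=
  l.filterMap (fun x => match x with | .orig u => some u | _ => none)

set_option linter.deprecated false in
theorem List.chain'_cons {α : Type*} {R : α → α → Prop} {a b : α} {l : List α} :
    List.Chain' R (a :: b :: l) ↔ R a b ∧ List.Chain' R (b :: l) :=
  List.isChain_cons_cons

set_option linter.deprecated false in
theorem List.chain'_cons' {α : Type*} {R : α → α → Prop} {x : α} {l : List α} :
    List.Chain' R (x :: l) ↔ (∀ y ∈ l.head?, R x y) ∧ List.Chain' R l :=
  List.isChain_cons

namespace NCAux
variable {V : Type*}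

def enc (t : V) : List V → List (NCVert V)
  | [] => [.D t, .D' t]
  | u :: c => .orig u :: .dash u :: enc t c

lemma enc_ne_nil (t : V) (c : List V) : enc t c ≠ [] := by
  cases c <;> simp [enc]

lemma origVerts_enc (t : V) (c : List V) : origVerts (enc t c) = c := by
  induction c with
  | nil => rfl
  | cons u c ih => simpa [enc, origVerts] using ih

lemma orig_mem_enc {t u : V} {c : List V} : NCVert.orig u ∈ enc t c ↔ u ∈ c := by
  induction c with
  | nil => simp [enc]
  | cons w c ih => simp [enc, ih]

lemma dash_mem_enc {t u : V} {c : List V} : NCVert.dash u ∈ enc t c ↔ u ∈ c := by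
  induction c with
  | nil => simp [enc]
  | cons w c ih => simp [enc, ih]

lemma nodup_enc {t : V} {c : List V} (h : c.Nodup) : (enc t c).Nodup := by
  induction c with
  | nil => simp [enc]
  | cons u c ih =>
    simp only [List.nodup_cons] at h
    simp [enc, List.nodup_cons, orig_mem_enc, dash_mem_enc, h.1, ih h.2]

lemma getLast_enc (t : V) (c : List V) : (enc t c).getLast? = some (.D' t) := by
  induction c with
  | nil => simp [enc]
  | cons u c ih =>
    obtain ⟨a, l', he⟩ := List.exists_cons_of_ne_nil (enc_ne_nil t c)
    rw [show enc t (u :: c) = .orig u :: .dash u :: enc t c from rfl, he,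
      List.getLast?_cons_cons, List.getLast?_cons_cons, ← he, ih]

lemma head_enc (t u : V) (c : List V) : (enc t (u :: c)).head? = some (.orig u) := rfl

variable {A : V → V → Prop} {Vτ : Set V}

lemma chain_enc (t u : V) (c : List V) :
    (enc t (u :: c)).Chain' (NCAdj A Vτ) ↔
      (u :: c).Chain' (fun a b => A a b ∧ b ∉ Vτ) ∧
        A ((u :: c).getLast (List.cons_ne_nil u c)) t ∧ t ∈ Vτ := by
  induction c generalizing u with
  | nil =>
    simp [enc, List.chain'_cons, NCAdj, List.Chain']
  | cons w c ih =>
    rw [show enc t (u :: w :: c) = .orig u :: .dash u :: enc t (w :: c) from rfl,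
      List.chain'_cons, List.chain'_cons']
    simp only [head_enc, Option.mem_def, Option.some_inj, forall_eq']
    rw [ih w, List.chain'_cons]
    simp [NCAdj, List.getLast_cons]
    tauto
end NCAux

namespace NCAux
variable {V : Type*} {A : V → V → Prop} {Vτ : Set V}

lemma chain'_tail_prop {α : Type*} {R : α → α → Prop} {P : α → Prop}
    (h : ∀ a b, R a b → P b) :
    ∀ l : List α, l.Chain' R → ∀ x ∈ l.tail, P x
  | [] => by simp
  | [a] => by simp
  | a :: b :: l => by
    intro hc x hx
    rw [List.chain'_cons] at hc
    simp only [List.tail_cons, List.mem_cons] at hx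
    rcases hx with rfl | hx'
    · exact h a x hc.1
    · exact chain'_tail_prop h (b :: l) hc.2 x (by simpa using hx')

lemma chain'_and {α : Type*} {R : α → α → Prop} {P : α → Prop} :
    ∀ l : List α, l.Chain' R → (∀ x ∈ l.tail, P x) → l.Chain' fun a b => R a b ∧ P b
  | [] => by simp [List.Chain']
  | [a] => by simp [List.Chain']
  | a :: b :: l => by
    intro hc hp
    rw [List.chain'_cons] at hc ⊢
    refine ⟨⟨hc.1, hp b (by simp)⟩, chain'_and (b :: l) hc.2 fun x hx => hp x ?_⟩
    simp only [List.tail_cons] at hx ⊢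
    exact List.mem_cons_of_mem b hx

lemma struct : ∀ (n : ℕ) (l : List (NCVert V)), l.length ≤ n →
    l.Chain' (NCAdj A Vτ) → ∀ s t : V, l.head? = some (.orig s) →
    l.getLast? = some (.D' t) → l = enc t (origVerts l) := by
  intro n
  induction n with
  | zero =>
    intro l hl _ s t hh _
    have h0 : l = [] := List.eq_nil_of_length_eq_zero (Nat.le_zero.mp hl)
    subst h0; simp at hh
  | succ n ih =>
    intro l hlen hch s t hh hl
    match l with
    | [] => simp at hh
    | x :: l1 =>
      obtain rfl : x = NCVert.orig s := by simpa using hh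
      match l1 with
      | [] => simp at hl
      | y :: l2 =>
        rw [List.chain'_cons] at hch
        have hy : y = NCVert.dash s := by
          cases y <;> simp [NCAdj] at hch ⊢
          exact hch.1.symm
        subst hy
        match l2 with
        | [] => simp at hl
        | z :: l3 =>
          rw [List.chain'_cons] at hch
          obtain ⟨h1, h2, hch3⟩ := hch
          cases z with
          | orig w =>
            have hlen2 : (NCVert.orig w :: l3).length ≤ n := by
              simp at hlen ⊢; omega
            have hl2 : (NCVert.orig w :: l3).getLast? = some (NCVert.D' t) := by
              rw [List.getLast?_cons_cons, List.getLast?_cons_cons] at hl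
              exact hl
            have := ih _ hlen2 hch3 w t rfl hl2
            calc NCVert.orig s :: NCVert.dash s :: NCVert.orig w :: l3
                = NCVert.orig s :: NCVert.dash s :: enc t (origVerts (NCVert.orig w :: l3)) := by
                  rw [← this]
              _ = enc t (origVerts (NCVert.orig s :: NCVert.dash s :: NCVert.orig w :: l3)) := by
                  simp [enc, origVerts]
          | dash w => simp [NCAdj] at h2
          | D' w => simp [NCAdj] at h2
          | D w =>
            match l3 with
            | [] => simp at hl
            | z' :: l4 =>
              rw [List.chain'_cons] at hch3
              obtain ⟨h3, hch4⟩ := hch3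
              have hz' : z' = NCVert.D' w := by
                cases z' <;> simp [NCAdj] at h3 ⊢
                exact h3.1.symm
              subst hz'
              match l4 with
              | [] =>
                have hw : w = t := by simpa using hl
                subst hw
                simp [enc, origVerts]
              | a :: l5 =>
                rw [List.chain'_cons] at hch4
                exact absurd hch4.1 (by cases a <;> simp [NCAdj])

lemma origVerts_nodup {l : List (NCVert V)} (h : l.Nodup) : (origVerts l).Nodup := by
  refine List.Nodup.filterMap ?_ h
  intro a a' b hb hb'
  cases a <;> cases a' <;> simp_all

end NCAux

open NCAux in
/-- For `v ∈ V_τ`, extracting the undashed vertices gives a bijective correspondence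
between directed paths in `G_NC` from `v` to `D_{v'}` and directed cycles of `G`
(represented as lists starting at `v`) passing through `v` and through no other
vertex of `V_τ`. -/
theorem unipaths_biject_with_unicycles {V : Type*} (A : V → V → Prop) (Vτ : Set V)
    (hfvs : ∀ c : List V, IsDiCycle A c → ∃ x ∈ c, x ∈ Vτ)
    (v : V) (hv : v ∈ Vτ) :
    Set.BijOn origVerts
      {l : List (NCVert V) | IsDiPathFromTo (NCAdj A Vτ) l (.orig v) (.D' v)}
      {c : List V | IsDiCycle A c ∧ c.head? = some v ∧ ∀ x ∈ c, x ∈ Vτ → x = v} := by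
  constructor
  · -- MapsTo
    intro l hl
    obtain ⟨hne, hnd, hch, hh, hlast⟩ := hl
    have hstruct : l = enc v (origVerts l) := struct l.length l le_rfl hch v v hh hlast
    have hndc : (origVerts l).Nodup := origVerts_nodup hnd
    rcases hc : origVerts l with _ | ⟨u, ws⟩
    · rw [hc] at hstruct; rw [hstruct] at hh; simp [enc] at hh
    · rw [hc] at hstruct hndc
      have hu : u = v := by
        rw [hstruct] at hh
        simpa [head_enc] using hh
      have hchain := (chain_enc (A := A) (Vτ := Vτ) v u ws).mp (hstruct ▸ hch)
      obtain ⟨hch', hAlast, -⟩ := hchain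
      have hnot : ∀ x ∈ ws, x ∉ Vτ :=
        chain'_tail_prop (fun a b h => h.2) (u :: ws) hch'
      refine ⟨⟨by simp, hndc, hch'.imp fun a b h => h.1, ?_⟩,
        by rw [List.head?_cons, hu], ?_⟩
      · intro x hx y hy
        rw [List.getLast?_eq_getLast_of_ne_nil (List.cons_ne_nil u ws)] at hx
        simp only [Option.mem_def, Option.some_inj, List.head?_cons] at hx hy
        subst hx; subst hy
        rw [hu] at hAlast ⊢
        exact hAlast
      · intro x hx hxV
        rcases List.mem_cons.mp hx with rfl | hx'
        · exact hu
        · exact absurd hxV (hnot x hx')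
  constructor
  · -- InjOn
    intro l1 h1 l2 h2 heq
    obtain ⟨-, -, hch1, hh1, hl1⟩ := h1
    obtain ⟨-, -, hch2, hh2, hl2⟩ := h2
    rw [struct l1.length l1 le_rfl hch1 v v hh1 hl1,
      struct l2.length l2 le_rfl hch2 v v hh2 hl2, heq]
  · -- SurjOn
    intro c hc
    obtain ⟨⟨hne, hnd, hchA, hcyc⟩, hhead, honly⟩ := hc
    obtain ⟨ws, rfl⟩ : ∃ ws, c = v :: ws := by
      cases c with
      | nil => simp at hhead
      | cons u ws =>
        exact ⟨ws, by rw [show u = v from by simpa using hhead]⟩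
    have hvnot : v ∉ ws := (List.nodup_cons.mp hnd).1
    refine ⟨enc v (v :: ws), ?_, origVerts_enc v _⟩
    have htail : ∀ x ∈ (v :: ws).tail, x ∉ Vτ := by
      intro x hx hxV
      exact hvnot ((honly x (List.mem_cons_of_mem v hx) hxV) ▸ hx)
    have hAlast : A ((v :: ws).getLast (List.cons_ne_nil v ws)) v := by
      refine hcyc _ ?_ v rfl
      rw [List.getLast?_eq_getLast_of_ne_nil (List.cons_ne_nil v ws)]
      rfl
    exact ⟨enc_ne_nil _ _, nodup_enc hnd,
      (chain_enc v v ws).mpr ⟨chain'_and _ hchA htail, hAlast, hv⟩,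
      head_enc v v ws, getLast_enc v _⟩
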